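/- If a connected graph G on m vertices admits a bipolar ordering, then for two agents the egalitarian price of connectivity of G is at most 2. Concretely: for any instance with two agents where each vertex is positively valued by at most one agent, taking the least prefix {1,...,k} of the bipolar ordering worth at least u_i(G)/2 to some agent i, and giving the complement to the other agent j, yields a connected allocation in which agent i gets at least u_i(G)/2 and agent j gets at least u_j(G)/2. -/

import Mathlib

def ConnB {V : Type*} (G : SimpleGraph V) (s : Finset V) : Prop :=
  s = ∅ ∨ (G.induce (s : Set V)).Connected

def IsAlloc {V : Type*} [Fintype V] [DecidableEq V] {n : ℕ} (A : Fin n → Finset V) : Prop :=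
  (∀ i j : Fin n, i ≠ j → Disjoint (A i) (A j)) ∧ Finset.univ.biUnion A = Finset.univ

/-- A bipolar ordering of `G` on `m = card V` vertices: a bijection `σ : Fin m ≃ V` such that
every vertex with label `i ∈ {2,…,m-1}` (0-indexed: `0 < i < m-1`) is adjacent to some vertex
with a larger label and some vertex with a smaller label. -/
def IsBipolarOrdering {V : Type*} [Fintype V] (G : SimpleGraph V)
    (σ : Fin (Fintype.card V) ≃ V) : Prop :=
  ∀ i : Fin (Fintype.card V), 0 < i.val → i.val + 1 < Fintype.card V →
    (∃ j : Fin (Fintype.card V), i < j ∧ G.Adj (σ i) (σ j)) ∧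
    (∃ j : Fin (Fintype.card V), j < i ∧ G.Adj (σ i) (σ j))

lemma conn_singleton {V : Type*} (G : SimpleGraph V) (v : V) :
    (G.induce {v}).Connected := by
  have : Nonempty ↥({v} : Set V) := ⟨⟨v, rfl⟩⟩
  refine SimpleGraph.Connected.mk fun a b => ?_
  have ha : a.1 = v := a.2
  have hb : b.1 = v := b.2
  have : a = b := Subtype.ext (ha.trans hb.symm)
  subst this; exact SimpleGraph.Reachable.refl _

lemma conn_insert {V : Type*} (G : SimpleGraph V) {s : Set V}
    (hs : (G.induce s).Connected) {v w : V} (hw : w ∈ s) (ha : G.Adj v w) :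
    (G.induce (insert v s)).Connected := by
  have h := SimpleGraph.connected_induce_union (conn_singleton G v).preconnected hs.preconnected
    (Set.mem_singleton v) hw ha
  rw [Set.insert_eq]; exact h

lemma conn_univ {V : Type*} [Fintype V] (G : SimpleGraph V) (hG : G.Connected) :
    (G.induce (Set.univ : Set V)).Connected :=
  ((SimpleGraph.induceUnivIso G).connected_iff).mpr hG

lemma pre_conn {V : Type*} [Fintype V] (G : SimpleGraph V) (hG : G.Connected)
    (σ : Fin (Fintype.card V) ≃ V) (hσ : IsBipolarOrdering G σ) :
    ∀ k, 1 ≤ k → k ≤ Fintype.card V →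
      (G.induce {v : V | (σ.symm v).val < k}).Connected := by
  intro k hk1
  induction k, hk1 using Nat.le_induction with
  | base =>
    intro hm
    have h0 : 0 < Fintype.card V := hm
    have hset : {v : V | (σ.symm v).val < 1} = {σ ⟨0, h0⟩} := by
      ext v
      simp only [Set.mem_setOf_eq, Set.mem_singleton_iff, Nat.lt_one_iff]
      constructor
      · intro h
        have : σ.symm v = ⟨0, h0⟩ := Fin.ext h
        rw [← this, Equiv.apply_symm_apply]
      · intro h; subst h; simp
    rw [hset]; exact conn_singleton G _
  | succ k hk ih =>
    intro hm
    have hkm : k < Fintype.card V := lt_of_lt_of_le (Nat.lt_succ_self k) hm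
    have hset : {v : V | (σ.symm v).val < k + 1}
        = insert (σ ⟨k, hkm⟩) {v : V | (σ.symm v).val < k} := by
      ext v
      simp only [Set.mem_setOf_eq, Set.mem_insert_iff]
      constructor
      · intro h
        rcases Nat.lt_succ_iff_lt_or_eq.mp h with h' | h'
        · exact Or.inr h'
        · left
          have : σ.symm v = ⟨k, hkm⟩ := Fin.ext h'
          rw [← this, Equiv.apply_symm_apply]
      · rintro (h | h)
        · subst h; simp
        · exact Nat.lt_succ_of_lt h
    rcases eq_or_lt_of_le hm with heq | hlt
    · have : {v : V | (σ.symm v).val < k + 1} = Set.univ := by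
        ext v; simp [heq, (σ.symm v).isLt]
      rw [this]; exact conn_univ G hG
    · obtain ⟨-, j, hj, hadj⟩ := hσ ⟨k, hkm⟩ hk hlt
      have hjmem : σ j ∈ {v : V | (σ.symm v).val < k} := by
        simp only [Set.mem_setOf_eq, Equiv.symm_apply_apply]
        exact hj
      rw [hset]
      exact conn_insert G (ih hkm.le) hjmem hadj

lemma suf_conn {V : Type*} [Fintype V] (G : SimpleGraph V) (hG : G.Connected)
    (σ : Fin (Fintype.card V) ≃ V) (hσ : IsBipolarOrdering G σ) :
    ∀ k, k < Fintype.card V →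
      (G.induce {v : V | k ≤ (σ.symm v).val}).Connected := by
  have key : ∀ d k, k < Fintype.card V → Fintype.card V - k = d + 1 →
      (G.induce {v : V | k ≤ (σ.symm v).val}).Connected := by
    intro d
    induction d with
    | zero =>
      intro k hk hd
      have hset : {v : V | k ≤ (σ.symm v).val} = {σ ⟨k, hk⟩} := by
        ext v
        simp only [Set.mem_setOf_eq, Set.mem_singleton_iff]
        constructor
        · intro h
          have hlt := (σ.symm v).isLt
          have hv : (σ.symm v).val = k := by omega
          have : σ.symm v = ⟨k, hk⟩ := Fin.ext hv
          rw [← this, Equiv.apply_symm_apply]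
        · intro h; subst h; simp
      rw [hset]; exact conn_singleton G _
    | succ d ih =>
      intro k hk hd
      rcases Nat.eq_zero_or_pos k with rfl | hk0
      · have : {v : V | 0 ≤ (σ.symm v).val} = Set.univ := by
          ext v; simp
        rw [this]; exact conn_univ G hG
      have hk1 : k + 1 < Fintype.card V := by omega
      have hset : {v : V | k ≤ (σ.symm v).val}
          = insert (σ ⟨k, hk⟩) {v : V | k + 1 ≤ (σ.symm v).val} := by
        ext v
        simp only [Set.mem_setOf_eq, Set.mem_insert_iff]
        constructor
        · intro h
          rcases eq_or_lt_of_le h with h' | h'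
          · left
            have : σ.symm v = ⟨k, hk⟩ := Fin.ext h'.symm
            rw [← this, Equiv.apply_symm_apply]
          · exact Or.inr h'
        · rintro (h | h)
          · subst h; simp
          · omega
      obtain ⟨⟨j, hj, hadj⟩, -⟩ := hσ ⟨k, hk⟩ hk0 hk1
      have hjmem : σ j ∈ {v : V | k + 1 ≤ (σ.symm v).val} := by
        simp only [Set.mem_setOf_eq, Equiv.symm_apply_apply]
        exact hj
      have hconn := ih (k + 1) hk1 (by omega)
      rw [hset]
      exact conn_insert G hconn hjmem hadj
  intro k hk
  exact key (Fintype.card V - k - 1) k hk (by omega)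

theorem egal_poc_bipolar {V : Type*} [Fintype V] [DecidableEq V]
    (G : SimpleGraph V) (hG : G.Connected)
    (σ : Fin (Fintype.card V) ≃ V) (hσ : IsBipolarOrdering G σ)
    (u : Fin 2 → V → ℝ) (hu : ∀ i v, 0 ≤ u i v)
    (hone : ∀ v : V, ∀ i j : Fin 2, 0 < u i v → 0 < u j v → i = j) :
    ∃ k : ℕ, k ≤ Fintype.card V ∧ ∃ i j : Fin 2, i ≠ j ∧
      (ConnB G (Finset.univ.filter (fun v : V => (σ.symm v).val < k))) ∧
      (ConnB G (Finset.univ.filter (fun v : V => ¬ (σ.symm v).val < k))) ∧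
      (∑ v : V, u i v) / 2 ≤ ∑ v ∈ Finset.univ.filter (fun v : V => (σ.symm v).val < k), u i v ∧
      (∑ v : V, u j v) / 2 ≤
        ∑ v ∈ Finset.univ.filter (fun v : V => ¬ (σ.symm v).val < k), u j v := by
  classical
  have hTnn : ∀ i : Fin 2, 0 ≤ ∑ v : V, u i v :=
    fun i => Finset.sum_nonneg fun v _ => hu i v
  have hPm : (Finset.univ.filter (fun v : V => (σ.symm v).val < Fintype.card V))
      = Finset.univ := by
    ext v; simp [(σ.symm v).isLt]
  set Q : ℕ → Prop := fun k => ∃ i : Fin 2, (∑ v : V, u i v) / 2 ≤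
      ∑ v ∈ Finset.univ.filter (fun v : V => (σ.symm v).val < k), u i v with hQdef
  have hQm : Q (Fintype.card V) := by
    refine ⟨0, ?_⟩
    rw [hPm]
    linarith [hTnn 0]
  have hex : ∃ k, Q k := ⟨_, hQm⟩
  set k := Nat.find hex with hkdef
  have hkQ : Q k := Nat.find_spec hex
  have hkm : k ≤ Fintype.card V := Nat.find_min' hex hQm
  obtain ⟨i, hi⟩ := hkQ
  set j : Fin 2 := ⟨1 - i.val, by omega⟩ with hjdef
  have hij : i ≠ j := by
    intro h
    have h2 := congrArg Fin.val h
    have h3 := i.isLt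
    simp [hjdef] at h2
    omega
  have hsplit : ∀ i' : Fin 2,
      (∑ v ∈ Finset.univ.filter (fun v : V => (σ.symm v).val < k), u i' v)
      + (∑ v ∈ Finset.univ.filter (fun v : V => ¬ (σ.symm v).val < k), u i' v)
      = ∑ v : V, u i' v := fun i' => Finset.sum_filter_add_sum_filter_not _ _ _
  refine ⟨k, hkm, i, j, hij, ?_, ?_, hi, ?_⟩
  · -- prefix connected
    rcases Nat.eq_zero_or_pos k with hk0 | hk1
    · left
      rw [Finset.eq_empty_iff_forall_notMem]
      intro v hv
      rw [Finset.mem_filter, hk0] at hv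
      omega
    · right
      have hcoe : ((Finset.univ.filter (fun v : V => (σ.symm v).val < k) : Finset V) : Set V)
          = {v : V | (σ.symm v).val < k} := by
        ext v; simp
      rw [hcoe]
      exact pre_conn G hG σ hσ k hk1 hkm
  · -- suffix connected
    rcases eq_or_lt_of_le hkm with hke | hkl
    · left
      rw [Finset.eq_empty_iff_forall_notMem]
      intro v hv
      rw [Finset.mem_filter] at hv
      exact hv.2 (by rw [hke]; exact (σ.symm v).isLt)
    · right
      have hcoe : ((Finset.univ.filter (fun v : V => ¬ (σ.symm v).val < k) : Finset V) : Set V)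
          = {v : V | k ≤ (σ.symm v).val} := by
        ext v; simp [not_lt]
      rw [hcoe]
      exact suf_conn G hG σ hσ k hkl
  · -- suffix value
    rcases Nat.eq_zero_or_pos k with hk0 | hk1
    · have huniv : (Finset.univ.filter (fun v : V => ¬ (σ.symm v).val < k)) = Finset.univ := by
        ext v; simp [hk0]
      rw [huniv]
      linarith [hTnn j]
    · obtain ⟨t, hkt⟩ : ∃ t, k = t + 1 := ⟨k - 1, by omega⟩
      have hmin : ∀ i' : Fin 2,
          ∑ v ∈ Finset.univ.filter (fun v : V => (σ.symm v).val < t), u i' v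
            < (∑ v : V, u i' v) / 2 := by
        intro i'
        by_contra h
        exact Nat.find_min hex (show t < k by omega) ⟨i', not_lt.mp h⟩
      have htm : t < Fintype.card V := by omega
      set w := σ ⟨t, htm⟩ with hwdef
      have hwnot : w ∉ Finset.univ.filter (fun v : V => (σ.symm v).val < t) := by
        simp [hwdef]
      have hins : Finset.univ.filter (fun v : V => (σ.symm v).val < k)
          = insert w (Finset.univ.filter (fun v : V => (σ.symm v).val < t)) := by
        ext v
        simp only [Finset.mem_filter, Finset.mem_insert, Finset.mem_univ, true_and, hkt]
        constructor
        · intro h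
          rcases Nat.lt_succ_iff_lt_or_eq.mp h with h' | h'
          · exact Or.inr h'
          · left
            have : σ.symm v = ⟨t, htm⟩ := Fin.ext h'
            rw [hwdef, ← this, Equiv.apply_symm_apply]
        · rintro (h | h)
          · subst h; simp [hwdef]
          · omega
      have hstep : ∀ i' : Fin 2,
          ∑ v ∈ Finset.univ.filter (fun v : V => (σ.symm v).val < k), u i' v
          = u i' w + ∑ v ∈ Finset.univ.filter (fun v : V => (σ.symm v).val < t), u i' v := by
        intro i'
        rw [hins, Finset.sum_insert hwnot]
      have hupos : 0 < u i w := by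
        by_contra h
        have h0 : u i w = 0 := le_antisymm (not_lt.mp h) (hu i w)
        have h1 := hmin i
        rw [hstep i, h0] at hi
        linarith
      have hjz : u j w = 0 := by
        by_contra h
        have hp : 0 < u j w := lt_of_le_of_ne (hu j w) (Ne.symm h)
        exact hij (hone w i j hupos hp)
      have h1 := hmin j
      have h2 := hstep j
      have h3 := hsplit j
      linarith
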